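/- Every additive submonoid of the nonnegative cone of an ordered field that is a BF-monoid is hereditarily atomic: every submonoid of it is atomic. -/

import Mathlib

/-- `a` is an atom of the additive submonoid `P`. -/
def IsAtomOf {K : Type*} [AddCommMonoid K] (P : AddSubmonoid K) (a : K) : Prop :=
  a ∈ P ∧ a ≠ 0 ∧ ∀ x ∈ P, ∀ y ∈ P, a = x + y → x = 0 ∨ y = 0

/-- `P` is atomic: every element is a finite sum of atoms. -/
def IsAtomicMonoid {K : Type*} [AddCommMonoid K] (P : AddSubmonoid K) : Prop :=
  ∀ x ∈ P, ∃ s : Multiset K, (∀ a ∈ s, IsAtomOf P a) ∧ s.sum = x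

/-- The set of factorizations of `x` into atoms of `P`. -/
def Factorizations {K : Type*} [AddCommMonoid K] (P : AddSubmonoid K) (x : K) :
    Set (Multiset K) :=
  {s | (∀ a ∈ s, IsAtomOf P a) ∧ s.sum = x}

/-- `P` is an FF-monoid. -/
def IsFFMonoid {K : Type*} [AddCommMonoid K] (P : AddSubmonoid K) : Prop :=
  IsAtomicMonoid P ∧ ∀ x ∈ P, (Factorizations P x).Finite

/-- `P` is a BF-monoid. -/
def IsBFMonoid {K : Type*} [AddCommMonoid K] (P : AddSubmonoid K) : Prop :=
  IsAtomicMonoid P ∧ ∀ x ∈ P, {n : ℕ | ∃ s ∈ Factorizations P x, Multiset.card s = n}.Finite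

lemma key_bounded_atomic {K : Type*} [AddCommMonoid K] (P Q : AddSubmonoid K)
    (hQP : Q ≤ P) (hAtomic : IsAtomicMonoid P) :
    ∀ n : ℕ, ∀ x ∈ Q, (∀ s ∈ Factorizations P x, Multiset.card s ≤ n) →
      ∃ s : Multiset K, (∀ a ∈ s, IsAtomOf Q a) ∧ s.sum = x := by
  intro n
  induction n with
  | zero =>
    intro x hxQ hbound
    obtain ⟨s, hs, hsum⟩ := hAtomic x (hQP hxQ)
    have hcard : Multiset.card s ≤ 0 := hbound s ⟨hs, hsum⟩
    have : s = 0 := Multiset.card_eq_zero.mp (Nat.le_zero.mp hcard)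
    subst this
    exact ⟨0, by simp, by simpa using hsum⟩
  | succ n ih =>
    intro x hxQ hbound
    by_cases hx0 : x = 0
    · exact ⟨0, by simp, by simp [hx0]⟩
    by_cases hatom : IsAtomOf Q x
    · exact ⟨{x}, by simpa using hatom, by simp⟩
    · -- x splits as y + z with y, z nonzero in Q
      have hsplit : ∃ y ∈ Q, ∃ z ∈ Q, x = y + z ∧ ¬(y = 0 ∨ z = 0) := by
        by_contra h
        push_neg at h
        exact hatom ⟨hxQ, hx0, h⟩
      obtain ⟨y, hyQ, z, hzQ, hxyz, hne⟩ := hsplit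
      push_neg at hne
      obtain ⟨hy0, hz0⟩ := hne
      -- nonzero elements have nonempty factorizations
      have hfacne : ∀ w : K, w ∈ P → w ≠ 0 → ∀ t ∈ Factorizations P w,
          1 ≤ Multiset.card t := by
        intro w hwP hw0 t ht
        rcases ht with ⟨hta, hts⟩
        by_contra hlt
        push_neg at hlt
        have : t = 0 := Multiset.card_eq_zero.mp (Nat.lt_one_iff.mp hlt)
        subst this
        exact hw0 (by simpa using hts.symm)
      -- combine a factorization of one side with any of the other
      obtain ⟨ty, hty⟩ := hAtomic y (hQP hyQ)
      obtain ⟨tz, htz⟩ := hAtomic z (hQP hzQ)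
      have hboundy : ∀ s ∈ Factorizations P y, Multiset.card s ≤ n := by
        intro s hs
        have hmem : s + tz ∈ Factorizations P x := by
          constructor
          · intro a ha
            rcases Multiset.mem_add.mp ha with h | h
            · exact hs.1 a h
            · exact htz.1 a h
          · rw [Multiset.sum_add, hs.2, htz.2, hxyz]
        have htot := hbound _ hmem
        rw [Multiset.card_add] at htot
        have h1 := hfacne z (hQP hzQ) hz0 tz htz
        omega
      have hboundz : ∀ s ∈ Factorizations P z, Multiset.card s ≤ n := by
        intro s hs
        have hmem : ty + s ∈ Factorizations P x := by
          constructor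
          · intro a ha
            rcases Multiset.mem_add.mp ha with h | h
            · exact hty.1 a h
            · exact hs.1 a h
          · rw [Multiset.sum_add, hs.2, hty.2, hxyz]
        have htot := hbound _ hmem
        rw [Multiset.card_add] at htot
        have h1 := hfacne y (hQP hyQ) hy0 ty hty
        omega
      obtain ⟨sy, hsy, hsysum⟩ := ih y hyQ hboundy
      obtain ⟨sz, hsz, hszsum⟩ := ih z hzQ hboundz
      refine ⟨sy + sz, ?_, ?_⟩
      · intro a ha
        rcases Multiset.mem_add.mp ha with h | h
        · exact hsy a h
        · exact hsz a h
      · rw [Multiset.sum_add, hsysum, hszsum, hxyz]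

theorem bf_positive_monoid_hereditarily_atomic {K : Type*} [Field K] [LinearOrder K] [IsStrictOrderedRing K]
    (P : AddSubmonoid K) (hP : ∀ x ∈ P, 0 ≤ x) (hBF : IsBFMonoid P) :
    ∀ Q : AddSubmonoid K, Q ≤ P → IsAtomicMonoid Q := by
  obtain ⟨hAtomic, hLen⟩ := hBF
  intro Q hQP x hxQ
  have hfin := hLen x (hQP hxQ)
  obtain ⟨N, hN⟩ := hfin.bddAbove
  refine key_bounded_atomic P Q hQP hAtomic N x hxQ ?_
  intro s hs
  exact hN ⟨s, hs, rfl⟩
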